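/- arXiv:0710.5415 — 2 statements merged into one kernel-verified Lean document; each statement's English description precedes it below -/
import Mathlib

section
/- Let n ≥ 1 and let b be a rational number. Then in the ring ℚ[[x_1, …, x_n]] of multivariate formal power series, ∏_{i=1}^n (1 − x_i)² · Σ_{α ∈ ℕ^n} (|α| + b) x^α = Σ_{A ⊆ [n]} (−1)^{|A|} (b − |A|) ∏_{j ∈ A} x_j, where |α| = α_1 + ⋯ + α_n and |A| is the cardinality of A. -/
/-- The multivariate formal power series with prescribed coefficients. -/
noncomputable def seriesOfCoeff {n : ℕ} (f : (Fin n →₀ ℕ) → ℚ) : MvPowerSeries (Fin n) ℚ := f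

/-- Total degree of an exponent vector. -/
def deg {n : ℕ} (α : Fin n →₀ ℕ) : ℕ := ∑ i, α i

open MvPowerSeries Finset

lemma coeff_series {n : ℕ} (f : (Fin n →₀ ℕ) → ℚ) (m : Fin n →₀ ℕ) :
    MvPowerSeries.coeff m (seriesOfCoeff f) = f m := rfl

lemma X_mul_series {n : ℕ} (i : Fin n) (c : (Fin n →₀ ℕ) → ℚ) :
    MvPowerSeries.X i * seriesOfCoeff c =
      seriesOfCoeff (fun m => if m i = 0 then 0 else c (m - Finsupp.single i 1)) := by
  ext m
  rw [coeff_series, MvPowerSeries.X, MvPowerSeries.coeff_monomial_mul]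
  simp only [Finsupp.single_le_iff, one_mul, coeff_series]
  split_ifs with h1 h2 h2 <;> first | omega | simp [coeff_series]

lemma oneSub_mul_series {n : ℕ} (i : Fin n) (c : (Fin n →₀ ℕ) → ℚ) :
    (1 - MvPowerSeries.X i) * seriesOfCoeff c =
      seriesOfCoeff (fun m => c m - if m i = 0 then 0 else c (m - Finsupp.single i 1)) := by
  rw [sub_mul, one_mul, X_mul_series]
  ext m
  simp [coeff_series]

lemma geom_series {n : ℕ} (s : Finset (Fin n)) :
    (∏ i ∈ s, (1 - MvPowerSeries.X i)) * seriesOfCoeff (fun _ => (1 : ℚ)) =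
      seriesOfCoeff (fun m => if ∀ i ∈ s, m i = 0 then 1 else 0) := by
  classical
  induction s using Finset.induction with
  | empty => simp only [Finset.prod_empty, one_mul, Finset.notMem_empty,
      false_implies, implies_true, if_true]
  | @insert a s ha ih =>
    rw [Finset.prod_insert ha, mul_assoc, ih, oneSub_mul_series]
    congr 1
    funext m
    have key : ∀ j, j ∈ s → ((m - Finsupp.single a 1 : Fin n →₀ ℕ) j = m j) := by
      intro j hj
      have hne : j ≠ a := fun h => ha (h ▸ hj)
      simp [Finsupp.tsub_apply, Finsupp.single_apply, Ne.symm hne]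
    have h2 : ((∀ i ∈ s, (m - Finsupp.single a 1 : Fin n →₀ ℕ) i = 0) ↔ ∀ i ∈ s, m i = 0) := by
      constructor
      · intro h i hi; rw [← key i hi]; exact h i hi
      · intro h i hi; rw [key i hi]; exact h i hi
    by_cases hma : m a = 0
    · have h1 : ((∀ i ∈ insert a s, m i = 0) ↔ (∀ i ∈ s, m i = 0)) := by
        simp only [Finset.mem_insert]
        constructor
        · intro h i hi; exact h i (Or.inr hi)
        · intro h i hi; rcases hi with rfl | hi; exact hma; exact h i hi
      simp [hma, h1]
    · simp only [Finsupp.tsub_apply] at h2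
      simp [hma, h2]

lemma geom_univ {n : ℕ} :
    (∏ i : Fin n, (1 - MvPowerSeries.X i)) * seriesOfCoeff (fun _ => (1 : ℚ)) = 1 := by
  classical
  rw [geom_series]
  ext m
  rw [coeff_series, MvPowerSeries.coeff_one]
  congr 1
  simp only [Finset.mem_univ, true_implies, eq_iff_iff]
  constructor
  · intro h; ext i; exact h i
  · intro h i; rw [h]; rfl

lemma Ti_eq {n : ℕ} (i : Fin n) :
    (1 - MvPowerSeries.X i) * seriesOfCoeff (fun m => (m i : ℚ)) =
      MvPowerSeries.X i * seriesOfCoeff (fun _ => (1 : ℚ)) := by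
  rw [oneSub_mul_series, X_mul_series]
  congr 1
  funext m
  by_cases h : m i = 0
  · simp [h]
  · rw [if_neg h, if_neg h]
    have h1 : (m - Finsupp.single i 1 : Fin n →₀ ℕ) i = m i - 1 := by
      simp [Finsupp.tsub_apply]
    rw [h1, Nat.cast_sub (Nat.one_le_iff_ne_zero.mpr h)]
    ring

lemma decompose {n : ℕ} (b : ℚ) :
    seriesOfCoeff (fun α : Fin n →₀ ℕ => (deg α : ℚ) + b) =
      (∑ i : Fin n, seriesOfCoeff (fun m => (m i : ℚ))) +
        MvPowerSeries.C (σ := Fin n) (R := ℚ) b * seriesOfCoeff (fun _ => (1 : ℚ)) := by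
  ext m
  rw [map_add, map_sum, MvPowerSeries.coeff_C_mul, coeff_series, coeff_series]
  simp only [coeff_series, mul_one, deg]
  push_cast
  ring

lemma lhs_eq {n : ℕ} (b : ℚ) :
    (∏ i : Fin n, (1 - MvPowerSeries.X i) ^ 2) *
        seriesOfCoeff (fun α => (deg α : ℚ) + b) =
      MvPowerSeries.C (σ := Fin n) (R := ℚ) b * (∏ i : Fin n, (1 - MvPowerSeries.X i)) +
        ∑ i : Fin n, MvPowerSeries.X i *
          ∏ j ∈ Finset.univ.erase i, (1 - MvPowerSeries.X j) := by
  rw [Finset.prod_pow, decompose, mul_add, Finset.mul_sum, add_comm]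
  have hgeom := geom_univ (n := n)
  congr 1
  · linear_combination (MvPowerSeries.C (σ := Fin n) (R := ℚ) b *
      ∏ i : Fin n, (1 - MvPowerSeries.X i)) * hgeom
  · apply Finset.sum_congr rfl
    intro i _
    have hP : (∏ j : Fin n, ((1 : MvPowerSeries (Fin n) ℚ) - MvPowerSeries.X j)) =
        ((1 : MvPowerSeries (Fin n) ℚ) - MvPowerSeries.X i) *
          ∏ j ∈ Finset.univ.erase i, ((1 : MvPowerSeries (Fin n) ℚ) - MvPowerSeries.X j) :=
      (Finset.mul_prod_erase Finset.univ _ (Finset.mem_univ i)).symm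
    rw [hP] at hgeom ⊢
    have hT := Ti_eq i
    linear_combination ((1 - MvPowerSeries.X i) *
        (∏ j ∈ Finset.univ.erase i, (1 - MvPowerSeries.X j))^2) * hT +
      (MvPowerSeries.X i * ∏ j ∈ Finset.univ.erase i, (1 - MvPowerSeries.X j)) * hgeom

lemma rhs_eq {n : ℕ} (s : Finset (Fin n)) (b : ℚ) :
    ∑ A ∈ s.powerset,
        MvPowerSeries.C (σ := Fin n) (R := ℚ) ((-1 : ℚ) ^ A.card * (b - A.card)) *
          ∏ j ∈ A, MvPowerSeries.X j =
      MvPowerSeries.C (σ := Fin n) (R := ℚ) b * (∏ i ∈ s, (1 - MvPowerSeries.X i)) +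
        ∑ i ∈ s, MvPowerSeries.X i * ∏ j ∈ s.erase i, (1 - MvPowerSeries.X j) := by
  classical
  induction s using Finset.induction generalizing b with
  | empty => simp
  | @insert a s ha ih =>
    rw [Finset.sum_powerset_insert ha, ih b]
    have step2 : ∑ t ∈ s.powerset,
        MvPowerSeries.C (σ := Fin n) (R := ℚ) ((-1 : ℚ) ^ (insert a t).card * (b - (insert a t).card)) *
          ∏ j ∈ insert a t, MvPowerSeries.X j =
        (- MvPowerSeries.X a) * ∑ t ∈ s.powerset,
          MvPowerSeries.C (σ := Fin n) (R := ℚ) ((-1 : ℚ) ^ t.card * ((b - 1) - t.card)) *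
            ∏ j ∈ t, MvPowerSeries.X j := by
      rw [Finset.mul_sum]
      refine Finset.sum_congr rfl fun t ht => ?_
      have hat : a ∉ t := fun h => ha (Finset.mem_powerset.mp ht h)
      rw [Finset.card_insert_of_notMem hat, Finset.prod_insert hat]
      have : ((-1 : ℚ)) ^ (t.card + 1) * (b - (t.card + 1 : ℕ)) =
          -((-1 : ℚ) ^ t.card * ((b - 1) - t.card)) := by
        push_cast; ring
      rw [this, map_neg]
      ring
    rw [step2, ih (b - 1)]
    rw [Finset.prod_insert ha, Finset.sum_insert ha, Finset.erase_insert ha]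
    have herase : ∑ i ∈ s, MvPowerSeries.X i *
        ∏ j ∈ (insert a s).erase i, ((1 : MvPowerSeries (Fin n) ℚ) - MvPowerSeries.X j) =
        ((1 : MvPowerSeries (Fin n) ℚ) - MvPowerSeries.X a) * ∑ i ∈ s, MvPowerSeries.X i *
          ∏ j ∈ s.erase i, ((1 : MvPowerSeries (Fin n) ℚ) - MvPowerSeries.X j) := by
      rw [Finset.mul_sum]
      refine Finset.sum_congr rfl fun i hi => ?_
      have hia : i ≠ a := fun h => ha (h ▸ hi)
      rw [Finset.erase_insert_of_ne hia.symm, Finset.prod_insert (fun h => ha (Finset.mem_of_mem_erase h))]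
      ring
    rw [herase, map_sub, map_one]
    ring

/-- In `ℚ[[x₁,…,xₙ]]`:
`∏ᵢ (1-xᵢ)² · Σ_α (|α| + b) x^α = Σ_{A ⊆ [n]} (-1)^{|A|} (b - |A|) ∏_{j∈A} xⱼ`. -/
theorem genFun_deg (n : ℕ) (hn : 1 ≤ n) (b : ℚ) :
    (∏ i : Fin n, (1 - MvPowerSeries.X i) ^ 2) *
      seriesOfCoeff (fun α => (deg α : ℚ) + b) =
    ∑ A : Finset (Fin n),
      MvPowerSeries.C (σ := Fin n) (R := ℚ) ((-1 : ℚ) ^ A.card * (b - A.card)) *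
        ∏ j ∈ A, MvPowerSeries.X j := by
  rw [lhs_eq b, ← rhs_eq Finset.univ b, Finset.powerset_univ]
end

section
/- Let n ≥ 1 and let 𝒪 ⊆ ℕ^n be a finite nonempty order ideal with extreme corner (m_1, …, m_n), where m_i = max{α_i : α ∈ 𝒪}. Let S ⊆ [n] be nonempty, and let α, β ∈ ℕ^n be such that α_i > m_i for all i ∈ S and β_i = 0 for all i ∉ S. Then ind_𝒪(α + β) = ind_𝒪(α) + |β|, where |β| = β_1 + ⋯ + β_n. -/
/-- An order ideal in ℕ^n: a set of exponent vectors closed under componentwise division. -/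
def IsOrderIdeal {n : ℕ} (O : Set (Fin n →₀ ℕ)) : Prop :=
  ∀ α ∈ O, ∀ β : Fin n →₀ ℕ, β ≤ α → β ∈ O

/-- The border of a set `C ⊆ ℕ^n`: `∂C = {α + e_i : α ∈ C, i} \ C`. -/
def border {n : ℕ} (C : Set (Fin n →₀ ℕ)) : Set (Fin n →₀ ℕ) :=
  {γ | ∃ α ∈ C, ∃ i : Fin n, γ = α + Finsupp.single i 1} \ C

/-- The closed higher borders: `∂̄⁰O = O`, `∂̄ᵏO = ∂(∂̄ᵏ⁻¹O) ∪ ∂̄ᵏ⁻¹O`. -/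
def closedBorder {n : ℕ} (O : Set (Fin n →₀ ℕ)) : ℕ → Set (Fin n →₀ ℕ)
  | 0 => O
  | k + 1 => border (closedBorder O k) ∪ closedBorder O k

/-- The higher borders: `∂⁰O = O`, `∂ᵏO = ∂(∂̄ᵏ⁻¹O)`. -/
def borderIter {n : ℕ} (O : Set (Fin n →₀ ℕ)) : ℕ → Set (Fin n →₀ ℕ)
  | 0 => O
  | k + 1 => border (closedBorder O k)

/-- The index of `α` relative to `O`: the minimal `k` with `α ∈ ∂̄ᵏO`. -/
noncomputable def ind {n : ℕ} (O : Set (Fin n →₀ ℕ)) (α : Fin n →₀ ℕ) : ℕ :=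
  sInf {k | α ∈ closedBorder O k}

lemma deg_add {n : ℕ} (a b : Fin n →₀ ℕ) : deg (a + b) = deg a + deg b := by
  simp [deg, Finset.sum_add_distrib]

lemma deg_single {n : ℕ} (i : Fin n) : deg (Finsupp.single i 1) = 1 := by
  simp [deg, Finsupp.single_apply]

lemma deg_eq_zero {n : ℕ} (a : Fin n →₀ ℕ) : deg a = 0 ↔ a = 0 := by
  simp [deg, Finset.sum_eq_zero_iff, Finsupp.ext_iff]

lemma mem_closedBorder {n : ℕ} (O : Set (Fin n →₀ ℕ)) (k : ℕ) (γ : Fin n →₀ ℕ) :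
    γ ∈ closedBorder O k ↔ ∃ δ ∈ O, ∃ ε, deg ε ≤ k ∧ γ = δ + ε := by
  induction k generalizing γ with
  | zero =>
    simp only [closedBorder]
    constructor
    · intro h; exact ⟨γ, h, 0, by simp [deg], by simp⟩
    · rintro ⟨δ, hδ, ε, hε, rfl⟩
      have h0 : ε = 0 := (deg_eq_zero ε).1 (Nat.le_zero.mp hε)
      simpa [h0]
  | succ k ih =>
    constructor
    · intro h
      rcases h with h | h
      · rcases h.1 with ⟨a, ha, i, rfl⟩
        rcases (ih a).1 ha with ⟨δ, hδ, ε, hε, rfl⟩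
        refine ⟨δ, hδ, ε + Finsupp.single i 1, ?_, by rw [add_assoc]⟩
        rw [deg_add, deg_single]; omega
      · rcases (ih γ).1 h with ⟨δ, hδ, ε, hε, rfl⟩
        exact ⟨δ, hδ, ε, hε.trans (Nat.le_succ k), rfl⟩
    · rintro ⟨δ, hδ, ε, hε, rfl⟩
      by_cases hk : deg ε ≤ k
      · exact Or.inr ((ih _).2 ⟨δ, hδ, ε, hk, rfl⟩)
      · have hεk : deg ε = k + 1 := by omega
        have hεne : ε ≠ 0 := by
          intro h; rw [h] at hεk; simp [deg] at hεk
        obtain ⟨i, hi⟩ : ∃ i, ε i ≠ 0 := by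
          by_contra hc; push_neg at hc
          exact hεne (Finsupp.ext fun j => hc j)
        have hle : Finsupp.single i 1 ≤ ε := by
          rw [Finsupp.le_def]
          intro j
          rcases eq_or_ne j i with rfl | hj
          · simp [Finsupp.single_apply]; omega
          · simp [Finsupp.single_apply, hj.symm]
        have hsplit : ε = (ε - Finsupp.single i 1) + Finsupp.single i 1 :=
          (tsub_add_cancel_of_le hle).symm
        have hdeg' : deg (ε - Finsupp.single i 1) ≤ k := by
          have := deg_add (ε - Finsupp.single i 1) (Finsupp.single i 1)
          rw [← hsplit, deg_single] at this
          omega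
        have hmem : δ + (ε - Finsupp.single i 1) ∈ closedBorder O k :=
          (ih _).2 ⟨δ, hδ, _, hdeg', rfl⟩
        have heq : δ + ε = (δ + (ε - Finsupp.single i 1)) + Finsupp.single i 1 := by
          rw [add_assoc, ← hsplit]
        by_cases hc : δ + ε ∈ closedBorder O k
        · exact Or.inr hc
        · exact Or.inl ⟨⟨_, hmem, i, heq⟩, hc⟩

/-- If `O ⊆ ℕ^n` is a finite nonempty order ideal with extreme corner `(m_1, …, m_n)`,
`S ⊆ [n]` is nonempty, `α_i > m_i` for `i ∈ S` and `β_i = 0` for `i ∉ S`, then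
`ind_O(α + β) = ind_O(α) + |β|`. -/

theorem ind_increase_general (n : ℕ) (hn : 1 ≤ n) (O : Set (Fin n →₀ ℕ))
    (hfin : O.Finite) (hne : O.Nonempty) (hO : IsOrderIdeal O)
    (m : Fin n → ℕ) (hm : ∀ i, IsGreatest {a : ℕ | ∃ α ∈ O, α i = a} (m i))
    (S : Set (Fin n)) (hS : S.Nonempty) (α β : Fin n →₀ ℕ)
    (hα : ∀ i ∈ S, m i < α i) (hβ : ∀ i ∉ S, β i = 0) :
    ind O (α + β) = ind O α + deg β := by
  have h0 : (0 : Fin n →₀ ℕ) ∈ O := by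
    obtain ⟨γ, hγ⟩ := hne
    exact hO γ hγ 0 (zero_le (a := γ))
  have key : ∀ k, α + β ∈ closedBorder O k ↔ deg β ≤ k ∧ α ∈ closedBorder O (k - deg β) := by
    intro k
    rw [mem_closedBorder, mem_closedBorder]
    constructor
    · rintro ⟨δ, hδ, ε, hε, heq⟩
      have hle : β ≤ ε := by
        rw [Finsupp.le_def]
        intro i
        by_cases hi : i ∈ S
        · have h1 : δ i ≤ m i := (hm i).2 ⟨δ, hδ, rfl⟩
          have h2 : α i + β i = δ i + ε i := by
            have := congrArg (fun f => f i) heq; simpa using this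
          have h3 := hα i hi
          omega
        · rw [hβ i hi]; exact Nat.zero_le _
      obtain ⟨ε', hε'⟩ := le_iff_exists_add.mp hle
      have hα' : α = δ + ε' := by
        apply add_right_cancel (b := β)
        rw [heq, hε']
        abel
      have hdeg : deg ε = deg β + deg ε' := by rw [hε', deg_add]
      exact ⟨by omega, δ, hδ, ε', by omega, hα'⟩
    · rintro ⟨hk, δ, hδ, ε', hε', rfl⟩
      exact ⟨δ, hδ, ε' + β, by rw [deg_add]; omega, by rw [add_assoc]⟩
  have hmemα : α ∈ closedBorder O (ind O α) := by
    have hne' : {k | α ∈ closedBorder O k}.Nonempty :=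
      ⟨deg α, (mem_closedBorder O _ _).2 ⟨0, h0, α, le_refl _, by simp⟩⟩
    exact Nat.sInf_mem hne'
  have hset : {k | α + β ∈ closedBorder O k} = Set.Ici (ind O α + deg β) := by
    ext k
    simp only [Set.mem_setOf_eq, key k, Set.mem_Ici]
    constructor
    · rintro ⟨h1, h2⟩
      have : ind O α ≤ k - deg β := Nat.sInf_le h2
      omega
    · intro h
      refine ⟨by omega, ?_⟩
      obtain ⟨δ, hδ, ε, hε, rfl⟩ := (mem_closedBorder O _ _).1 hmemα
      exact (mem_closedBorder O _ _).2 ⟨δ, hδ, ε, by omega, rfl⟩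
  show sInf {k | α + β ∈ closedBorder O k} = ind O α + deg β
  rw [hset, csInf_Ici]
end
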